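/- Let F : X ⥤ A and U : A ⥤ X be functors between categories. Then F is left adjoint to U if and only if there exists an equivalence of categories K : Comma F (𝟭 A) ≌ Comma (𝟭 X) U between the comma categories F↓A and X↓U that commutes with the canonical projection functors to X and to A (i.e., K followed by the two projections of Comma (𝟭 X) U equals the two projections of Comma F (𝟭 A)). -/

import Mathlib

open CategoryTheory

section Aux

variable {X : Type*} {A : Type*} [Category X] [Category A] (F : X ⥤ A) (U : A ⥤ X)

lemma comma_obj_ext {T₁ T₂ T₃ : Type*} [Category T₁] [Category T₂] [Category T₃]
    {L : T₁ ⥤ T₃} {R : T₂ ⥤ T₃} (c d : Comma L R) (h1 : c.left = d.left)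
    (h2 : c.right = d.right)
    (h3 : c.hom = eqToHom (by rw [h1]) ≫ d.hom ≫ eqToHom (by rw [h2])) : c = d := by
  obtain ⟨cl, cr, ch⟩ := c
  obtain ⟨dl, dr, dh⟩ := d
  dsimp at h1 h2
  subst h1; subst h2
  simp only [eqToHom_refl, Category.comp_id, Category.id_comp] at h3
  subst h3
  rfl

/-- The forward functor from an adjunction. -/
@[simps]
def fwd (adj : F ⊣ U) : Comma F (𝟭 A) ⥤ Comma (𝟭 X) U where
  obj c := ⟨c.left, c.right, adj.homEquiv c.left c.right c.hom⟩
  map {c c'} m :=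
    { left := m.left
      right := m.right
      w := by
        have := m.w
        dsimp at this ⊢
        rw [← Adjunction.homEquiv_naturality_left, ← Adjunction.homEquiv_naturality_right, this] }

/-- The backward functor from an adjunction. -/
@[simps]
def bwd (adj : F ⊣ U) : Comma (𝟭 X) U ⥤ Comma F (𝟭 A) where
  obj d := ⟨d.left, d.right, (adj.homEquiv d.left d.right).symm d.hom⟩
  map {d d'} m :=
    { left := m.left
      right := m.right
      w := by
        have := m.w
        dsimp at this ⊢
        rw [← Adjunction.homEquiv_naturality_left_symm,
          ← Adjunction.homEquiv_naturality_right_symm, this] }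

/-- The equivalence of comma categories from an adjunction. -/
def commaEquivOfAdj (adj : F ⊣ U) : Comma F (𝟭 A) ≌ Comma (𝟭 X) U where
  functor := fwd F U adj
  inverse := bwd F U adj
  unitIso := NatIso.ofComponents
    (fun c => Comma.isoMk (Iso.refl _) (Iso.refl _) (by simp [fwd, bwd]))
    (by intros; ext <;> simp [fwd, bwd])
  counitIso := NatIso.ofComponents
    (fun d => Comma.isoMk (Iso.refl _) (Iso.refl _) (by simp [fwd, bwd]))
    (by intros; ext <;> simp [fwd, bwd])
  functor_unitIso_comp := by intros; ext <;> simp [fwd, bwd, NatIso.ofComponents]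

end Aux

/-- `F ⊣ U` if and only if there is an equivalence of categories `F↓A ≌ X↓U` between the comma
categories commuting with the canonical projections to `X` and to `A`. -/
theorem adjunction_iff_comma_equivalence
    {X : Type*} {A : Type*} [Category X] [Category A] (F : X ⥤ A) (U : A ⥤ X) :
    Nonempty (F ⊣ U) ↔
      ∃ K : Comma F (𝟭 A) ≌ Comma (𝟭 X) U,
        K.functor ⋙ Comma.fst (𝟭 X) U = Comma.fst F (𝟭 A) ∧
        K.functor ⋙ Comma.snd (𝟭 X) U = Comma.snd F (𝟭 A) := by
  constructor
  · rintro ⟨adj⟩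
    refine ⟨commaEquivOfAdj F U adj, ?_, ?_⟩
    · refine CategoryTheory.Functor.ext (fun c => rfl) ?_
      intros; simp [commaEquivOfAdj, fwd]; exact (Category.id_comp _).symm
    · refine CategoryTheory.Functor.ext (fun c => rfl) ?_
      intros; simp [commaEquivOfAdj, fwd]; exact (Category.id_comp _).symm
  · rintro ⟨K, hfst, hsnd⟩
    have objLeft : ∀ c : Comma F (𝟭 A), (K.functor.obj c).left = c.left := fun c =>
      Functor.congr_obj hfst c
    have objRight : ∀ c : Comma F (𝟭 A), (K.functor.obj c).right = c.right := fun c =>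
      Functor.congr_obj hsnd c
    have mapLeft : ∀ {c c' : Comma F (𝟭 A)} (m : c ⟶ c'),
        (K.functor.map m).left = eqToHom (objLeft c) ≫ m.left ≫ eqToHom (objLeft c').symm := by
      intro c c' m
      have := Functor.congr_hom hfst m
      simpa using this
    have mapRight : ∀ {c c' : Comma F (𝟭 A)} (m : c ⟶ c'),
        (K.functor.map m).right = eqToHom (objRight c) ≫ m.right ≫ eqToHom (objRight c').symm := by
      intro c c' m
      have := Functor.congr_hom hsnd m
      simpa using this
    set tf : ∀ c : Comma F (𝟭 A), c.left ⟶ U.obj c.right := fun c =>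
      eqToHom (objLeft c).symm ≫ (K.functor.obj c).hom ≫ U.map (eqToHom (objRight c)) with htf
    have nat : ∀ {c c' : Comma F (𝟭 A)} (m : c ⟶ c'),
        m.left ≫ tf c' = tf c ≫ U.map m.right := by
      intro c c' m
      have hw := (K.functor.map m).w
      rw [mapLeft m, mapRight m] at hw
      simp only [Functor.id_map, Functor.map_comp, eqToHom_map, Category.assoc] at hw
      simp only [htf, eqToHom_map, Category.assoc]
      rw [← cancel_epi (eqToHom (objLeft c)),
        ← cancel_mono (eqToHom (congrArg U.obj (objRight c')).symm)]
      simp only [Category.assoc, eqToHom_trans, eqToHom_trans_assoc, eqToHom_refl,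
        Category.comp_id, Category.id_comp]
      exact hw
    have inj : ∀ {x : X} {a : A} (f f' : F.obj x ⟶ a), tf ⟨x, a, f⟩ = tf ⟨x, a, f'⟩ → f = f' := by
      intro x a f f' h
      have hobj : K.functor.obj ⟨x, a, f⟩ = K.functor.obj ⟨x, a, f'⟩ := by
        refine comma_obj_ext _ _
          ((objLeft ⟨x, a, f⟩).trans (objLeft ⟨x, a, f'⟩).symm)
          ((objRight ⟨x, a, f⟩).trans (objRight ⟨x, a, f'⟩).symm) ?_
        simp only [htf, eqToHom_map] at h
        rw [← cancel_epi (eqToHom (objLeft (⟨x, a, f⟩ : Comma F (𝟭 A))).symm),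
          ← cancel_mono (eqToHom (congrArg U.obj (objRight (⟨x, a, f⟩ : Comma F (𝟭 A)))))]
        simp only [Category.assoc, eqToHom_trans, eqToHom_trans_assoc, eqToHom_refl,
          Category.comp_id, Category.id_comp]
        rw [h]
      have ψdef := K.functor.map_preimage (eqToHom hobj)
      set ψ := K.functor.preimage (eqToHom hobj) with hψ
      have hl : ψ.left = 𝟙 x := by
        have hthis := mapLeft ψ
        rw [ψdef, Comma.eqToHom_left] at hthis
        rw [eq_comm, eqToHom_comp_iff, comp_eqToHom_iff] at hthis
        simp only [hthis]
        simp
      have hr : ψ.right = 𝟙 a := by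
        have hthis := mapRight ψ
        rw [ψdef, Comma.eqToHom_right] at hthis
        rw [eq_comm, eqToHom_comp_iff, comp_eqToHom_iff] at hthis
        simp only [hthis]
        simp
      have hw := ψ.w
      rw [hl, hr] at hw
      simpa using hw.symm
    have surj : ∀ {x : X} {a : A} (g : x ⟶ U.obj a), ∃ f : F.obj x ⟶ a, tf ⟨x, a, f⟩ = g := by
      intro x a g
      set c := K.inverse.obj (⟨x, a, g⟩ : Comma (𝟭 X) U) with hc
      set φ := K.counitIso.app (⟨x, a, g⟩ : Comma (𝟭 X) U) with hφ
      set lh : c.left ⟶ x := eqToHom (objLeft c).symm ≫ φ.hom.left with hlh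
      set rh : c.right ⟶ a := eqToHom (objRight c).symm ≫ φ.hom.right with hrh
      set linv : x ⟶ c.left := φ.inv.left ≫ eqToHom (objLeft c) with hlinv
      refine ⟨F.map linv ≫ c.hom ≫ rh, ?_⟩
      have hwφ : (K.functor.obj c).hom ≫ U.map φ.hom.right = φ.hom.left ≫ g := by
        simpa using φ.hom.w.symm
      have hmw : F.map lh ≫ (F.map linv ≫ c.hom ≫ rh) = c.hom ≫ (𝟭 A).map rh := by
        rw [← Category.assoc, ← F.map_comp]
        have hid : lh ≫ linv = 𝟙 c.left := by
          rw [hlh, hlinv]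
          slice_lhs 2 3 => rw [← Comma.comp_left, Iso.hom_inv_id]
          simp [c]
        rw [hid]
        simp
      have hn := nat (⟨lh, rh, hmw⟩ : c ⟶ ⟨x, a, F.map linv ≫ c.hom ≫ rh⟩)
      have key : tf c ≫ U.map rh = lh ≫ g := by
        simp only [htf, hrh, hlh, Functor.map_comp, eqToHom_map, Category.assoc,
          eqToHom_trans, eqToHom_trans_assoc, eqToHom_refl, Category.comp_id, Category.id_comp]
        slice_lhs 2 3 => rw [hwφ]
      have hfin : lh ≫ tf ⟨x, a, F.map linv ≫ c.hom ≫ rh⟩ = lh ≫ g := by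
        rw [show (⟨lh, rh, hmw⟩ : c ⟶ ⟨x, a, F.map linv ≫ c.hom ≫ rh⟩).left = lh from rfl] at hn
        rw [show (⟨lh, rh, hmw⟩ : c ⟶ ⟨x, a, F.map linv ≫ c.hom ≫ rh⟩).right = rh from rfl] at hn
        rw [hn, key]
      have hiso : IsIso lh := by
        rw [hlh]
        infer_instance
      exact (cancel_epi lh).mp hfin
    refine ⟨Adjunction.mkOfHomEquiv
      { homEquiv := fun x a => Equiv.ofBijective (fun f => tf ⟨x, a, f⟩)
          ⟨fun f f' h => inj f f' h, fun g => surj g⟩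
        homEquiv_naturality_left_symm := ?_
        homEquiv_naturality_right := ?_ }⟩
    · intro x' x a g f
      set e := Equiv.ofBijective (fun f => tf (⟨x, a, f⟩ : Comma F (𝟭 A)))
        ⟨fun f f' h => inj f f' h, fun g => surj g⟩ with he
      set e' := Equiv.ofBijective (fun f => tf (⟨x', a, f⟩ : Comma F (𝟭 A)))
        ⟨fun f f' h => inj f f' h, fun g => surj g⟩ with he'
      change e'.symm (g ≫ f) = F.map g ≫ e.symm f
      apply e'.injective
      rw [Equiv.apply_symm_apply]
      have hm := nat (⟨g, 𝟙 a, by simp⟩ :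
        ({ left := x', right := a, hom := F.map g ≫ e.symm f } : Comma F (𝟭 A)) ⟶
          ⟨x, a, e.symm f⟩)
      simp only [U.map_id, Category.comp_id] at hm
      have : e' (F.map g ≫ e.symm f) = g ≫ tf ⟨x, a, e.symm f⟩ := hm.symm
      rw [this]
      have h2 : tf (⟨x, a, e.symm f⟩ : Comma F (𝟭 A)) = f := e.apply_symm_apply f
      rw [h2]
    · intro x a a' f h
      have hm := nat (⟨𝟙 x, h, by simp⟩ :
        ({ left := x, right := a, hom := f } : Comma F (𝟭 A)) ⟶ ⟨x, a', f ≫ h⟩)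
      simp only [Category.id_comp] at hm
      exact hm
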